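/- Suppose a ghost-number-zero element Φ of the ghost Fock space satisfies the BRST-extended trace constraint (T^{ml} + Y^{ml})Φ = 0 for all m,l, where Y^{(ml} Y^{ps)} = 0 identically (total symmetrization over four indices of products of two fermionic Y's vanishes). Then the ghost-independent component φ of Φ satisfies the Labastida double-trace constraint T^{(ml} T^{ps)} φ = 0. -/
import Mathlib


/-- If a ghost-number-zero element `Φ` satisfies the BRST-extended trace
constraint `(T^{ml} + Y^{ml})Φ = 0` for all `m, l`, where the `T`'s and `Y`'s
are symmetric, mutually commute, and the totally symmetrized product
`Y^{(ml} Y^{ps)} = 0` vanishes identically, then the ghost-independent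
component `φ = P₀ Φ` (with `P₀` the projection onto the ghost-independent
part, commuting with the `T`'s) satisfies the Labastida double-trace
constraint `T^{(ml} T^{ps)} φ = 0`. -/
theorem labastida_double_trace
    {V : Type*} [AddCommGroup V] [Module ℝ V] {ι : Type*}
    (T Y : ι → ι → Module.End ℝ V)
    (P0 : Module.End ℝ V)
    (hTsymm : ∀ m l, T m l = T l m)
    (hYsymm : ∀ m l, Y m l = Y l m)
    (hTT : ∀ m l p s, T m l * T p s = T p s * T m l)
    (hTY : ∀ m l p s, T m l * Y p s = Y p s * T m l)
    (hYY : ∀ m l p s, Y m l * Y p s + Y m p * Y l s + Y m s * Y l p = 0)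
    (hP0T : ∀ m l, P0 * T m l = T m l * P0)
    (Φ : V) (hΦ : ∀ m l, (T m l + Y m l) Φ = 0)
    (φ : V) (hφ : φ = P0 Φ) :
    ∀ m l p s, (T m l * T p s) φ + (T m p * T l s) φ + (T m s * T l p) φ = 0 := by
  intro m l p s
  -- T_ab Φ = - Y_ab Φ
  have hT1 : ∀ a b, T a b Φ = - Y a b Φ := by
    intro a b
    have h := hΦ a b
    rw [LinearMap.add_apply] at h
    exact eq_neg_of_add_eq_zero_left h
  -- (T_ab ∘ T_cd) Φ = (Y_ab ∘ Y_cd) Φ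
  have key : ∀ a b c d, (T a b * T c d) Φ = (Y a b * Y c d) Φ := by
    intro a b c d
    calc (T a b * T c d) Φ = (T c d * T a b) Φ := by rw [hTT]
      _ = T c d (T a b Φ) := rfl
      _ = T c d (- Y a b Φ) := by rw [hT1]
      _ = - T c d (Y a b Φ) := by rw [map_neg]
      _ = - (T c d * Y a b) Φ := rfl
      _ = - (Y a b * T c d) Φ := by rw [hTY]
      _ = - Y a b (T c d Φ) := rfl
      _ = - Y a b (- Y c d Φ) := by rw [hT1]
      _ = Y a b (Y c d Φ) := by rw [map_neg, neg_neg]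
      _ = (Y a b * Y c d) Φ := rfl
  have hsum : (T m l * T p s) Φ + (T m p * T l s) Φ + (T m s * T l p) Φ = 0 := by
    rw [key, key, key]
    have h := hYY m l p s
    calc (Y m l * Y p s) Φ + (Y m p * Y l s) Φ + (Y m s * Y l p) Φ
        = (Y m l * Y p s + Y m p * Y l s + Y m s * Y l p) Φ := by
          simp [LinearMap.add_apply]
      _ = 0 := by rw [h]; rfl
  -- now push P0 through the T's
  have comm : ∀ a b c d, (T a b * T c d) (P0 Φ) = P0 ((T a b * T c d) Φ) := by
    intro a b c d
    have : T a b * T c d * P0 = P0 * (T a b * T c d) := by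
      rw [mul_assoc, ← hP0T c d, ← mul_assoc, ← hP0T a b, mul_assoc]
    calc (T a b * T c d) (P0 Φ) = (T a b * T c d * P0) Φ := rfl
      _ = (P0 * (T a b * T c d)) Φ := by rw [this]
      _ = P0 ((T a b * T c d) Φ) := rfl
  rw [hφ, comm, comm, comm, ← map_add, ← map_add, hsum, map_zero]
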